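/- arXiv:2106.03524 — 5 statements merged into one kernel-verified Lean document; each statement's English description precedes it below -/
import Mathlib

section
/- Let x ∈ ℝ^d with x ≠ 0, h ∈ ℝ^d with h_j > 0, and let Q_h(x) be the quantization with varying steps whose coordinates are independent with [Q_h(x)]_j = ‖x‖ · sign(x_j) · ξ_j(|x_j|/‖x‖), where ξ_j is unbiased stochastic rounding to the grid {0, h_j, 2h_j, …}. Then for any symmetric positive semidefinite matrix 𝐋, E[‖Q_h(x) − x‖²_𝐋] ≤ min(Σ_j 𝐋_{jj} h_j², √(Σ_j 𝐋_{jj}² h_j²)) · ‖x‖². In particular ℒ(Q_h, 𝐋) ≤ ‖diag(𝐋) h‖. -/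
open Matrix MeasureTheory ProbabilityTheory BigOperators

/-- Integral of a function of a two-valued random variable. -/
lemma two_point_aux {Ω : Type*} [MeasurableSpace Ω] (μ : Measure Ω) [IsProbabilityMeasure μ]
    (ξ : Ω → ℝ) (hξ : Measurable ξ) (a b : ℝ) (hab : a ≠ b) (pa pb : ℝ)
    (hpa : 0 ≤ pa) (hpb : 0 ≤ pb) (hsum : pa + pb = 1)
    (hA : μ {ω | ξ ω = a} = ENNReal.ofReal pa)
    (hB : μ {ω | ξ ω = b} = ENNReal.ofReal pb) (F : ℝ → ℝ) :
    Integrable (fun ω => F (ξ ω)) μ ∧ ∫ ω, F (ξ ω) ∂μ = F a * pa + F b * pb := by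
  set A : Set Ω := {ω | ξ ω = a} with hAdef
  set B : Set Ω := {ω | ξ ω = b} with hBdef
  have hAm : MeasurableSet A := hξ (measurableSet_singleton a)
  have hBm : MeasurableSet B := hξ (measurableSet_singleton b)
  have hdisj : Disjoint A B := by
    rw [Set.disjoint_left]
    intro ω h1 h2
    exact hab ((h1 : ξ ω = a).symm.trans (h2 : ξ ω = b))
  have hABone : μ (A ∪ B) = 1 := by
    rw [measure_union hdisj hBm, hA, hB, ← ENNReal.ofReal_add hpa hpb, hsum,
      ENNReal.ofReal_one]
  have hc : μ (A ∪ B)ᶜ = 0 := by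
    rw [measure_compl (hAm.union hBm) (measure_ne_top μ _), hABone, measure_univ, tsub_self]
  have hae : ∀ᵐ ω ∂μ, ω ∈ A ∪ B := by
    rw [ae_iff]
    exact hc
  set g : Ω → ℝ := fun ω => A.indicator (fun _ => F a) ω + B.indicator (fun _ => F b) ω
    with hgdef
  have hg : (fun ω => F (ξ ω)) =ᵐ[μ] g := by
    filter_upwards [hae] with ω hω
    rcases hω with h1 | h2
    · have h1' : ξ ω = a := h1
      have hnB : ω ∉ B := fun h2 => hab (h1'.symm.trans h2)
      simp [hgdef, Set.indicator_of_mem h1, Set.indicator_of_notMem hnB, h1']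
    · have h2' : ξ ω = b := h2
      have hnA : ω ∉ A := fun h1 => hab ((h1 : ξ ω = a).symm.trans h2')
      simp [hgdef, Set.indicator_of_mem h2, Set.indicator_of_notMem hnA, h2']
  have hiA : Integrable (A.indicator (fun _ => F a)) μ :=
    (integrable_indicator_iff hAm).2 (integrableOn_const (measure_lt_top μ A).ne)
  have hiB : Integrable (B.indicator (fun _ => F b)) μ :=
    (integrable_indicator_iff hBm).2 (integrableOn_const (measure_lt_top μ B).ne)
  have hgi : Integrable g μ := hiA.add hiB
  refine ⟨hgi.congr hg.symm, ?_⟩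
  rw [integral_congr_ae hg, hgdef]
  have : ∫ ω, (A.indicator (fun _ => F a) ω + B.indicator (fun _ => F b) ω) ∂μ
      = (∫ ω, A.indicator (fun _ => F a) ω ∂μ) + ∫ ω, B.indicator (fun _ => F b) ω ∂μ :=
    integral_add hiA hiB
  rw [this, integral_indicator_const _ hAm, integral_indicator_const _ hBm, measureReal_def, measureReal_def, hA, hB,
    ENNReal.toReal_ofReal hpa, ENNReal.toReal_ofReal hpb]
  simp [smul_eq_mul]
  ring

/-- Variance bound for quantization with varying steps: for `x ≠ 0`, steps `h_j > 0`, and the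
random quantization `[Q_h(x)]_j = ‖x‖ · sign(x_j) · ξ_j(|x_j|/‖x‖)` with independent unbiased
stochastic roundings `ξ_j` to the grids `{0, h_j, 2h_j, …}`, and any symmetric positive
semidefinite `L`:
`E‖Q_h(x) - x‖²_L ≤ min(Σ_j L_jj h_j², √(Σ_j L_jj² h_j²)) ‖x‖²`; in particular the bound
`ℒ(Q_h, L) ≤ ‖diag(L) h‖` holds. -/
theorem stmt7 {d : ℕ} {Ω : Type*} [MeasurableSpace Ω] (μ : Measure Ω) [IsProbabilityMeasure μ]
    (x h : Fin d → ℝ) (hx : x ≠ 0) (hh : ∀ j, 0 < h j)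
    (L : Matrix (Fin d) (Fin d) ℝ) (hL : L.PosSemidef)
    (nx : ℝ) (hnx : nx = Real.sqrt (x ⬝ᵥ x))
    (v : Fin d → ℝ) (hv : ∀ j, v j = |x j| / nx)
    (k : Fin d → ℕ) (hk : ∀ j, k j = ⌊v j / h j⌋₊)
    (ξ : Fin d → Ω → ℝ) (hmeas : ∀ j, Measurable (ξ j))
    (hind : iIndepFun ξ μ)
    (hdown : ∀ j, μ {ω | ξ j ω = (k j : ℝ) * h j}
      = ENNReal.ofReal ((k j : ℝ) + 1 - v j / h j))
    (hup : ∀ j, μ {ω | ξ j ω = ((k j : ℝ) + 1) * h j}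
      = ENNReal.ofReal (v j / h j - (k j : ℝ)))
    (Q : Ω → Fin d → ℝ) (hQ : ∀ ω j, Q ω j = nx * Real.sign (x j) * ξ j ω) :
    (∫ ω, (Q ω - x) ⬝ᵥ L.mulVec (Q ω - x) ∂μ)
      ≤ min (∑ j, L j j * (h j) ^ 2) (Real.sqrt (∑ j, (L j j) ^ 2 * (h j) ^ 2)) * (x ⬝ᵥ x)
    ∧ (∫ ω, (Q ω - x) ⬝ᵥ L.mulVec (Q ω - x) ∂μ)
      ≤ Real.sqrt (∑ j, (L j j) ^ 2 * (h j) ^ 2) * (x ⬝ᵥ x) := by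
  classical
  have hxx : 0 < x ⬝ᵥ x := by
    obtain ⟨j, hj⟩ := Function.ne_iff.mp hx
    have hd : x ⬝ᵥ x = ∑ i, x i ^ 2 := by simp [dotProduct, sq]
    rw [hd]
    exact Finset.sum_pos' (fun i _ => sq_nonneg _)
      ⟨j, Finset.mem_univ j, lt_of_le_of_ne (sq_nonneg _) (Ne.symm (pow_ne_zero 2 hj))⟩
  have hnx0 : 0 < nx := hnx ▸ Real.sqrt_pos.2 hxx
  have hnxsq : nx ^ 2 = x ⬝ᵥ x := by rw [hnx]; exact Real.sq_sqrt hxx.le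
  have hv0 : ∀ j, 0 ≤ v j := fun j => by
    rw [hv j]; exact div_nonneg (abs_nonneg _) hnx0.le
  set p : Fin d → ℝ := fun j => v j / h j - k j with hpdef
  have hp0 : ∀ j, 0 ≤ p j := by
    intro j
    have h1 : ((k j : ℝ)) ≤ v j / h j := by
      rw [hk j]
      exact_mod_cast Nat.floor_le (div_nonneg (hv0 j) (hh j).le)
    simp only [hpdef]
    linarith
  have hp1 : ∀ j, p j ≤ 1 := by
    intro j
    have h1 : v j / h j < (k j : ℝ) + 1 := by
      rw [hk j]
      exact_mod_cast Nat.lt_floor_add_one (v j / h j)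
    simp only [hpdef]
    linarith
  have hph : ∀ j, p j * h j = v j - k j * h j := by
    intro j
    have hp' : p j = v j / h j - k j := by rw [hpdef]
    rw [hp', sub_mul, div_mul_cancel₀ _ (hh j).ne']
  -- two-point computations
  have htp : ∀ (F : ℝ → ℝ) (j : Fin d), Integrable (fun ω => F (ξ j ω)) μ ∧
      ∫ ω, F (ξ j ω) ∂μ
        = F ((k j : ℝ) * h j) * (1 - p j) + F (((k j : ℝ) + 1) * h j) * p j := by
    intro F j
    have hne : ((k j : ℝ)) * h j ≠ ((k j : ℝ) + 1) * h j := by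
      have := hh j
      intro hEq
      nlinarith
    have h1p : (1 - p j) = (k j : ℝ) + 1 - v j / h j := by
      simp only [hpdef]; ring
    exact two_point_aux μ (ξ j) (hmeas j) _ _ hne (1 - p j) (p j)
      (by linarith [hp1 j]) (hp0 j) (by ring)
      (by rw [h1p]; exact hdown j) (hup j) F
  set E : Fin d → ℝ := fun j => ∫ ω, (ξ j ω - v j) ^ 2 ∂μ with hEdef
  have hInt1 : ∀ j, Integrable (fun ω => ξ j ω - v j) μ := fun j =>
    (htp (fun t => t - v j) j).1
  have hMean : ∀ j, ∫ ω, (ξ j ω - v j) ∂μ = 0 := by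
    intro j
    rw [(htp (fun t => t - v j) j).2]
    linear_combination hph j
  have hInt2 : ∀ j, Integrable (fun ω => (ξ j ω - v j) ^ 2) μ := fun j =>
    (htp (fun t => (t - v j) ^ 2) j).1
  have hEval : ∀ j, E j = p j * (1 - p j) * h j ^ 2 := by
    intro j
    have h1 : (k j : ℝ) * h j - v j = -(p j * h j) := by linarith [hph j]
    have h2 : ((k j : ℝ) + 1) * h j - v j = (1 - p j) * h j := by linarith [hph j]
    show (∫ ω, (ξ j ω - v j) ^ 2 ∂μ) = p j * (1 - p j) * h j ^ 2
    rw [(htp (fun t => (t - v j) ^ 2) j).2, h1, h2]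
    ring
  have hE_nonneg : ∀ j, 0 ≤ E j := fun j =>
    integral_nonneg fun ω => sq_nonneg _
  have hEh : ∀ j, E j ≤ h j ^ 2 := by
    intro j
    rw [hEval j]
    nlinarith [sq_nonneg (h j * p j - h j), mul_nonneg (hp0 j) (sq_nonneg (h j))]
  have hEv : ∀ j, E j ≤ h j * v j := by
    intro j
    rw [hEval j]
    have hphv : p j * h j ≤ v j := by
      have := hph j
      have hk0 : (0:ℝ) ≤ (k j : ℝ) * h j := mul_nonneg (Nat.cast_nonneg _) (hh j).le
      linarith
    nlinarith [mul_nonneg (hh j).le (sub_nonneg.2 hphv), sq_nonneg (p j * h j)]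
  -- independence of centered variables, cross terms vanish
  have hindC : ∀ i j : Fin d, i ≠ j →
      IndepFun (fun ω => ξ i ω - v i) (fun ω => ξ j ω - v j) μ := by
    intro i j hij
    exact (hind.indepFun hij).comp (measurable_id.sub measurable_const)
      (measurable_id.sub measurable_const)
  have hIcross : ∀ i j : Fin d, i ≠ j →
      ∫ ω, (ξ i ω - v i) * (ξ j ω - v j) ∂μ = 0 := by
    intro i j hij
    have := (hindC i j hij).integral_mul_eq_mul_integral
      ((hmeas i).sub measurable_const).aestronglyMeasurable
      ((hmeas j).sub measurable_const).aestronglyMeasurable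
    rw [show (fun ω => (ξ i ω - v i) * (ξ j ω - v j))
        = (fun ω => ξ i ω - v i) * (fun ω => ξ j ω - v j) from rfl, this,
      hMean i, hMean j, mul_zero]
  have hIntTerm : ∀ i j : Fin d,
      Integrable (fun ω => (ξ i ω - v i) * (ξ j ω - v j)) μ := by
    intro i j
    by_cases hij : i = j
    · subst hij
      simpa [pow_two] using hInt2 i
    · exact (hindC i j hij).integrable_mul (hInt1 i) (hInt1 j)
  -- pointwise identity
  set c : Fin d → ℝ := fun j => nx * Real.sign (x j) with hcdef
  have hQx : ∀ ω j, Q ω j - x j = c j * (ξ j ω - v j) := by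
    intro ω j
    have hsx : Real.sign (x j) * |x j| = x j := by
      rcases lt_trichotomy (x j) 0 with hlt | heq | hgt
      · rw [Real.sign_of_neg hlt, abs_of_neg hlt]; ring
      · simp [heq]
      · rw [Real.sign_of_pos hgt, abs_of_pos hgt]; ring
    have hcx : c j * v j = x j := by
      simp only [hcdef, hv j]
      field_simp
      linear_combination hsx
    rw [hQ ω j]
    simp only [hcdef] at hcx ⊢
    linarith [hcx, mul_sub (nx * Real.sign (x j)) (ξ j ω) (v j)]
  have hform : ∀ ω, (Q ω - x) ⬝ᵥ L.mulVec (Q ω - x)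
      = ∑ i, ∑ j, c i * c j * L i j * ((ξ i ω - v i) * (ξ j ω - v j)) := by
    intro ω
    simp only [dotProduct, mulVec, Pi.sub_apply, Finset.mul_sum]
    refine Finset.sum_congr rfl fun i _ => Finset.sum_congr rfl fun j _ => ?_
    rw [hQx ω i, hQx ω j]
    ring
  -- main integral identity
  have hmain : ∫ ω, (Q ω - x) ⬝ᵥ L.mulVec (Q ω - x) ∂μ
      = ∑ j, (c j) ^ 2 * L j j * E j := by
    rw [integral_congr_ae (Filter.Eventually.of_forall hform)]
    have hIi : ∀ i ∈ Finset.univ, Integrable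
        (fun ω => ∑ j, c i * c j * L i j * ((ξ i ω - v i) * (ξ j ω - v j))) μ := by
      intro i _
      exact integrable_finset_sum _ fun j _ => (hIntTerm i j).const_mul _
    rw [integral_finset_sum _ hIi]
    refine Finset.sum_congr rfl fun i _ => ?_
    rw [integral_finset_sum _ fun j _ => (hIntTerm i j).const_mul _]
    have hin : ∀ j ∈ Finset.univ,
        ∫ ω, c i * c j * L i j * ((ξ i ω - v i) * (ξ j ω - v j)) ∂μ
          = c i * c j * L i j * ∫ ω, (ξ i ω - v i) * (ξ j ω - v j) ∂μ := by
      intro j _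
      exact integral_const_mul _ _
    rw [Finset.sum_congr rfl hin, Finset.sum_eq_single i]
    · have hsq : ∫ ω, (ξ i ω - v i) * (ξ i ω - v i) ∂μ = E i := by
        simp only [hEdef, pow_two]
      rw [hsq]; ring
    · intro j _ hji
      rw [hIcross i j (Ne.symm hji), mul_zero]
    · intro hmem
      exact absurd (Finset.mem_univ i) hmem
  -- diagonal of L is nonneg
  have hLdiag : ∀ j, 0 ≤ L j j := by
    intro j
    have h2 := hL.diag_nonneg (i := j)
    simpa [dotProduct, mulVec, Pi.single_apply, mul_ite, ite_mul] using h2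
  have hsign : ∀ j, (Real.sign (x j)) ^ 2 ≤ 1 := by
    intro j
    rcases Real.sign_apply_eq (x j) with hs | hs | hs <;> rw [hs] <;> norm_num
  have hstep1 : ∑ j, (c j) ^ 2 * L j j * E j ≤ nx ^ 2 * ∑ j, L j j * E j := by
    rw [Finset.mul_sum]
    refine Finset.sum_le_sum fun j _ => ?_
    have hLE : 0 ≤ L j j * E j := mul_nonneg (hLdiag j) (hE_nonneg j)
    have h1 : (c j) ^ 2 = nx ^ 2 * (Real.sign (x j)) ^ 2 := by
      simp only [hcdef]; ring
    nlinarith [mul_nonneg (mul_nonneg (sq_nonneg nx)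
      (sub_nonneg.2 (hsign j))) hLE]
  have hSA : ∑ j, L j j * E j ≤ ∑ j, L j j * h j ^ 2 :=
    Finset.sum_le_sum fun j _ => mul_le_mul_of_nonneg_left (hEh j) (hLdiag j)
  have hSB : ∑ j, L j j * E j ≤ Real.sqrt (∑ j, (L j j) ^ 2 * h j ^ 2) := by
    have h1 : ∑ j, L j j * E j ≤ ∑ j, (L j j * h j) * v j := by
      refine Finset.sum_le_sum fun j _ => ?_
      calc L j j * E j ≤ L j j * (h j * v j) :=
            mul_le_mul_of_nonneg_left (hEv j) (hLdiag j)
        _ = (L j j * h j) * v j := by ring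
    have hv1 : ∑ j, (v j) ^ 2 = 1 := by
      have hvj : ∀ j, (v j) ^ 2 = x j ^ 2 / (x ⬝ᵥ x) := by
        intro j
        rw [hv j, div_pow, sq_abs, hnxsq]
      rw [Finset.sum_congr rfl fun j _ => hvj j, ← Finset.sum_div]
      have hd : ∑ j, x j ^ 2 = x ⬝ᵥ x := by simp [dotProduct, sq]
      rw [hd, div_self hxx.ne']
    have h2 : (∑ j, (L j j * h j) * v j) ^ 2
        ≤ (∑ j, (L j j * h j) ^ 2) * (∑ j, (v j) ^ 2) :=
      Finset.sum_mul_sq_le_sq_mul_sq _ _ _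
    have h3 : ∑ j, (L j j * h j) * v j ≤ Real.sqrt (∑ j, (L j j) ^ 2 * h j ^ 2) := by
      have heq : (∑ j, (L j j) ^ 2 * h j ^ 2) = ∑ j, (L j j * h j) ^ 2 :=
        Finset.sum_congr rfl fun j _ => by ring
      rw [heq]
      refine Real.le_sqrt_of_sq_le ?_
      calc (∑ j, (L j j * h j) * v j) ^ 2
          ≤ (∑ j, (L j j * h j) ^ 2) * (∑ j, (v j) ^ 2) := h2
        _ = ∑ j, (L j j * h j) ^ 2 := by rw [hv1, mul_one]
    linarith
  have hfin1 : ∫ ω, (Q ω - x) ⬝ᵥ L.mulVec (Q ω - x) ∂μ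
      ≤ (∑ j, L j j * h j ^ 2) * (x ⬝ᵥ x) := by
    rw [hmain, ← hnxsq]
    calc ∑ j, (c j) ^ 2 * L j j * E j ≤ nx ^ 2 * ∑ j, L j j * E j := hstep1
      _ ≤ nx ^ 2 * ∑ j, L j j * h j ^ 2 := by
          have := mul_le_mul_of_nonneg_left hSA (sq_nonneg nx)
          linarith
      _ = (∑ j, L j j * h j ^ 2) * nx ^ 2 := by ring
  have hfin2 : ∫ ω, (Q ω - x) ⬝ᵥ L.mulVec (Q ω - x) ∂μ
      ≤ Real.sqrt (∑ j, (L j j) ^ 2 * h j ^ 2) * (x ⬝ᵥ x) := by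
    rw [hmain, ← hnxsq]
    calc ∑ j, (c j) ^ 2 * L j j * E j ≤ nx ^ 2 * ∑ j, L j j * E j := hstep1
      _ ≤ nx ^ 2 * Real.sqrt (∑ j, (L j j) ^ 2 * h j ^ 2) := by
          have := mul_le_mul_of_nonneg_left hSB (sq_nonneg nx)
          linarith
      _ = Real.sqrt (∑ j, (L j j) ^ 2 * h j ^ 2) * nx ^ 2 := by ring
  refine ⟨?_, hfin2⟩
  rw [min_mul_of_nonneg _ _ hxx.le]
  exact le_min hfin1 hfin2
end

section
/- For block quantization Q_h^B with blocks of sizes d_1, …, d_B and steps h_1, …, h_B > 0, applied independently block-wise, and any symmetric positive semidefinite matrix 𝐋 with diagonal block matrices 𝐋^{ll} ∈ ℝ^{d_l×d_l}: E[‖Q_h^B(x) − x‖²_𝐋] ≤ max_{1≤l≤B} min(h_l² ‖diag(𝐋^{ll})‖₁, h_l ‖diag(𝐋^{ll})‖) · ‖x‖² for all x. In particular ℒ(Q_h^B, 𝐋) ≤ max_l h_l ‖diag(𝐋^{ll})‖. -/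
open Matrix MeasureTheory ProbabilityTheory BigOperators

lemma twoPoint9 {Ω : Type*} [MeasurableSpace Ω] (μ : Measure Ω) [IsProbabilityMeasure μ]
    (f : Ω → ℝ) (hf : Measurable f) {a b pA pB : ℝ} (hab : a ≠ b)
    (hA : μ {ω | f ω = a} = ENNReal.ofReal pA)
    (hB : μ {ω | f ω = b} = ENNReal.ofReal pB)
    (hpA : 0 ≤ pA) (hpB : 0 ≤ pB) (hsum : pA + pB = 1)
    (φ : ℝ → ℝ) :
    Integrable (fun ω => φ (f ω)) μ ∧ ∫ ω, φ (f ω) ∂μ = φ a * pA + φ b * pB := by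
  have hAm : MeasurableSet (f ⁻¹' {a}) := hf (measurableSet_singleton a)
  have hμA : μ (f ⁻¹' {a}) = ENNReal.ofReal pA := hA
  have hμB : μ (f ⁻¹' {b}) = ENNReal.ofReal pB := hB
  have hdisj : Disjoint (f ⁻¹' {a}) (f ⁻¹' {b}) := by
    rw [Set.disjoint_left]
    intro ω h1 h2
    exact hab ((Set.mem_preimage.1 h1).symm.trans (Set.mem_preimage.1 h2))
  have hunion : μ (f ⁻¹' {a} ∪ f ⁻¹' {b}) = 1 := by
    rw [measure_union hdisj (hf (measurableSet_singleton b)), hμA, hμB,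
      ← ENNReal.ofReal_add hpA hpB, hsum, ENNReal.ofReal_one]
  have hnull : μ (f ⁻¹' {a} ∪ f ⁻¹' {b})ᶜ = 0 := by
    rw [measure_compl (hAm.union (hf (measurableSet_singleton b))) (measure_ne_top _ _),
      hunion, measure_univ, tsub_self]
  set g : Ω → ℝ := fun ω => (f ⁻¹' {a}).indicator (fun _ => φ a - φ b) ω + φ b with hg
  have hgae : (fun ω => φ (f ω)) =ᵐ[μ] g := by
    rw [Filter.EventuallyEq, ae_iff]
    refine measure_mono_null (fun ω hω => ?_) hnull
    simp only [Set.mem_setOf_eq] at hω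
    intro hmem
    rcases hmem with hmem | hmem
    · apply hω
      have : f ω = a := hmem
      simp [hg, Set.indicator_of_mem hmem, this]
    · apply hω
      have hfb : f ω = b := hmem
      by_cases hA' : ω ∈ f ⁻¹' {a}
      · exact absurd ((Set.mem_preimage.1 hA').symm.trans hfb) hab
      · simp [hg, Set.indicator_of_notMem hA', hfb]
  have hgint : Integrable g μ :=
    (((integrable_const (φ a - φ b)).indicator hAm).add (integrable_const (φ b)))
  constructor
  · exact hgint.congr hgae.symm
  · rw [integral_congr_ae hgae, integral_add ((integrable_const _).indicator hAm)
      (integrable_const _), integral_indicator_const _ hAm, integral_const, measureReal_def, measureReal_def, hμA,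
      ENNReal.toReal_ofReal hpA, measure_univ]
    simp only [smul_eq_mul, ENNReal.toReal_one, one_mul]
    linear_combination (-(φ b)) * hsum

/-- Variance bound for block quantization: with blocks `l : Fin B` of sizes `dd l`, steps
`h l > 0`, and the random block quantization
`[Q_h^B(x)]_t = ‖x^l‖ · sign(x_t) · ξ_t(|x_t|/‖x^l‖)` (unbiased stochastic rounding to the grid
`{0, h_l, 2h_l, …}`, independently per coordinate), for any symmetric positive semidefinite `L`:
`E‖Q_h^B(x) - x‖²_L ≤ max_l min(h_l² ‖diag(L^{ll})‖₁, h_l ‖diag(L^{ll})‖) ‖x‖²`; in particular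
`ℒ(Q_h^B, L) ≤ max_l h_l ‖diag(L^{ll})‖`. -/
theorem stmt9 {B : ℕ} {dd : Fin B → ℕ} {Ω : Type*} [MeasurableSpace Ω]
    (μ : Measure Ω) [IsProbabilityMeasure μ]
    (x : ((l : Fin B) × Fin (dd l)) → ℝ) (h : Fin B → ℝ) (hh : ∀ l, 0 < h l)
    (L : Matrix ((l : Fin B) × Fin (dd l)) ((l : Fin B) × Fin (dd l)) ℝ) (hL : L.PosSemidef)
    (nxl : Fin B → ℝ) (hnxl : ∀ l, nxl l = Real.sqrt (∑ j, (x ⟨l, j⟩) ^ 2))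
    (v : ((l : Fin B) × Fin (dd l)) → ℝ) (hv : ∀ t, v t = |x t| / nxl t.1)
    (k : ((l : Fin B) × Fin (dd l)) → ℕ) (hk : ∀ t, k t = ⌊v t / h t.1⌋₊)
    (ξ : ((l : Fin B) × Fin (dd l)) → Ω → ℝ) (hmeas : ∀ t, Measurable (ξ t))
    (hind : iIndepFun ξ μ)
    (hdown : ∀ t, μ {ω | ξ t ω = (k t : ℝ) * h t.1}
      = ENNReal.ofReal ((k t : ℝ) + 1 - v t / h t.1))
    (hup : ∀ t, μ {ω | ξ t ω = ((k t : ℝ) + 1) * h t.1}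
      = ENNReal.ofReal (v t / h t.1 - (k t : ℝ)))
    (Q : Ω → ((l : Fin B) × Fin (dd l)) → ℝ)
    (hQ : ∀ ω t, Q ω t = nxl t.1 * Real.sign (x t) * ξ t ω) :
    (∫ ω, (Q ω - x) ⬝ᵥ L.mulVec (Q ω - x) ∂μ)
      ≤ (⨆ l, min ((h l) ^ 2 * ∑ j, L ⟨l, j⟩ ⟨l, j⟩)
          (h l * Real.sqrt (∑ j, (L ⟨l, j⟩ ⟨l, j⟩) ^ 2))) * (x ⬝ᵥ x)
    ∧ (∫ ω, (Q ω - x) ⬝ᵥ L.mulVec (Q ω - x) ∂μ)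
      ≤ (⨆ l, h l * Real.sqrt (∑ j, (L ⟨l, j⟩ ⟨l, j⟩) ^ 2)) * (x ⬝ᵥ x) := by
  have hsign : ∀ y : ℝ, Real.sign y * |y| = y := by
    intro y
    rcases lt_trichotomy y 0 with hy | hy | hy
    · rw [Real.sign_of_neg hy, abs_of_neg hy]; ring
    · simp [hy]
    · rw [Real.sign_of_pos hy, abs_of_pos hy]; ring
  have hsign1 : ∀ y : ℝ, (Real.sign y) ^ 2 ≤ 1 := by
    intro y
    rcases Real.sign_apply_eq y with hy | hy | hy <;> rw [hy] <;> norm_num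
  have hn0 : ∀ l, 0 ≤ nxl l := fun l => (hnxl l) ▸ Real.sqrt_nonneg _
  have hsq : ∀ l, nxl l ^ 2 = ∑ j, (x ⟨l, j⟩) ^ 2 := by
    intro l
    rw [hnxl, Real.sq_sqrt]
    positivity
  have hxzero : ∀ t : ((l : Fin B) × Fin (dd l)), nxl t.1 = 0 → x t = 0 := by
    rintro ⟨l, j⟩ h0
    have h1 : ∑ j, (x ⟨l, j⟩) ^ 2 = 0 := by rw [← hsq l, h0]; ring
    have h2 := (Finset.sum_eq_zero_iff_of_nonneg
      (fun i _ => sq_nonneg (x ⟨l, i⟩))).1 h1 j (Finset.mem_univ _)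
    exact pow_eq_zero_iff (two_ne_zero) |>.1 h2
  have hv0 : ∀ t : ((l : Fin B) × Fin (dd l)), 0 ≤ v t := fun t =>
    (hv t) ▸ div_nonneg (abs_nonneg _) (hn0 _)
  set c : ((l : Fin B) × Fin (dd l)) → ℝ := fun t => nxl t.1 * Real.sign (x t) with hc
  have hc2 : ∀ t, (c t) ^ 2 ≤ (nxl t.1) ^ 2 := by
    intro t
    have := hsign1 (x t)
    have h2 : (0:ℝ) ≤ (nxl t.1) ^ 2 := sq_nonneg _
    calc (c t) ^ 2 = (nxl t.1) ^ 2 * (Real.sign (x t)) ^ 2 := by rw [hc]; ring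
      _ ≤ (nxl t.1) ^ 2 * 1 := by nlinarith
      _ = (nxl t.1) ^ 2 := by ring
  have hx' : ∀ t, x t = c t * v t := by
    intro t
    rcases eq_or_ne (nxl t.1) 0 with h0 | h0
    · simp [hc, h0, hxzero t h0]
    · rw [hv, hc]
      field_simp
      linear_combination -(hsign (x t))
  have hQx : ∀ ω t, (Q ω - x) t = c t * (ξ t ω - v t) := by
    intro ω t
    have hxt := hx' t
    rw [Pi.sub_apply, hQ]
    simp only [hc] at hxt ⊢
    linear_combination -hxt
  -- per-coordinate facts
  have hpos : ∀ t : ((l : Fin B) × Fin (dd l)), 0 < h t.1 := fun t => hh _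
  have hkle : ∀ t, (k t : ℝ) ≤ v t / h t.1 := by
    intro t
    rw [hk]
    exact Nat.floor_le (div_nonneg (hv0 t) (hpos t).le)
  have hklt : ∀ t, v t / h t.1 < (k t : ℝ) + 1 := by
    intro t
    rw [hk]
    exact Nat.lt_floor_add_one _
  have hab : ∀ t, (k t : ℝ) * h t.1 ≠ ((k t : ℝ) + 1) * h t.1 := by
    intro t
    have := hpos t
    intro heq
    nlinarith
  have hpA0 : ∀ t, 0 ≤ (k t : ℝ) + 1 - v t / h t.1 := fun t => by linarith [hklt t]
  have hpB0 : ∀ t, 0 ≤ v t / h t.1 - (k t : ℝ) := fun t => by linarith [hkle t]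
  have hsumq : ∀ t, ((k t : ℝ) + 1 - v t / h t.1) + (v t / h t.1 - (k t : ℝ)) = 1 := by
    intro t; ring
  have hmean := fun t => twoPoint9 μ (ξ t) (hmeas t) (hab t) (hdown t) (hup t)
    (hpA0 t) (hpB0 t) (hsumq t) (fun y => y - v t)
  have hm2 := fun t => twoPoint9 μ (ξ t) (hmeas t) (hab t) (hdown t) (hup t)
    (hpA0 t) (hpB0 t) (hsumq t) (fun y => (y - v t) ^ 2)
  have hint : ∀ t, Integrable (fun ω => ξ t ω - v t) μ := fun t => (hmean t).1
  have hmean0 : ∀ t, ∫ ω, (ξ t ω - v t) ∂μ = 0 := by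
    intro t
    rw [(hmean t).2]
    have hne : h t.1 ≠ 0 := (hpos t).ne'
    field_simp
    ring
  have hint2 : ∀ t, Integrable (fun ω => (ξ t ω - v t) ^ 2) μ := fun t => (hm2 t).1
  set E : ((l : Fin B) × Fin (dd l)) → ℝ := fun t => ∫ ω, (ξ t ω - v t) ^ 2 ∂μ with hE
  have hEeq : ∀ t, E t = (h t.1) ^ 2 *
      ((v t / h t.1 - (k t : ℝ)) * ((k t : ℝ) + 1 - v t / h t.1)) := by
    intro t
    rw [hE]
    simp only
    rw [(hm2 t).2]
    have hne : h t.1 ≠ 0 := (hpos t).ne'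
    field_simp
    ring
  have hE0 : ∀ t, 0 ≤ E t := fun t => integral_nonneg fun ω => sq_nonneg _
  have hEh2 : ∀ t, E t ≤ (h t.1) ^ 2 := by
    intro t
    rw [hEeq t]
    have h1 := hpA0 t
    have h2 := hpB0 t
    have h3 := hkle t
    have h4 := hklt t
    have hprod : (v t / h t.1 - (k t : ℝ)) * ((k t : ℝ) + 1 - v t / h t.1) ≤ 1 := by
      nlinarith
    nlinarith [sq_nonneg (h t.1), mul_nonneg h2 h1]
  have hEhv : ∀ t, E t ≤ h t.1 * v t := by
    intro t
    rw [hEeq t]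
    have h1 := hkle t
    have h2 := hklt t
    have h3 := hpos t
    have h4 : (0:ℝ) ≤ (k t : ℝ) := Nat.cast_nonneg _
    have h5 := hpA0 t
    have h6 := hpB0 t
    have hvt : v t = (v t / h t.1) * h t.1 := (div_mul_cancel₀ _ h3.ne').symm
    have hprod : (v t / h t.1 - (k t : ℝ)) * ((k t : ℝ) + 1 - v t / h t.1) ≤ v t / h t.1 := by
      nlinarith
    calc (h t.1) ^ 2 * ((v t / h t.1 - (k t : ℝ)) * ((k t : ℝ) + 1 - v t / h t.1))
        ≤ (h t.1) ^ 2 * (v t / h t.1) := by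
          exact mul_le_mul_of_nonneg_left hprod (sq_nonneg _)
      _ = h t.1 * v t := by field_simp
  -- cross terms vanish
  have hIF : ∀ s t, s ≠ t → IndepFun (fun ω => ξ s ω - v s) (fun ω => ξ t ω - v t) μ := by
    intro s t hst
    have := (hind.indepFun hst).comp (φ := fun y => y - v s) (ψ := fun y => y - v t)
      (measurable_id.sub_const _) (measurable_id.sub_const _)
    exact this
  have hintpair : ∀ s t, Integrable (fun ω => (ξ s ω - v s) * (ξ t ω - v t)) μ := by
    intro s t
    rcases eq_or_ne s t with rfl | hst
    · have := hint2 s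
      refine this.congr (Filter.Eventually.of_forall fun ω => ?_)
      ring
    · exact (hIF s t hst).integrable_mul (hint s) (hint t)
  have hD0 : ∀ s t, s ≠ t → ∫ ω, (ξ s ω - v s) * (ξ t ω - v t) ∂μ = 0 := by
    intro s t hst
    have := IndepFun.integral_mul_eq_mul_integral (hIF s t hst) (hint s).1 (hint t).1
    rw [show (fun ω => ξ s ω - v s) * (fun ω => ξ t ω - v t)
        = fun ω => (ξ s ω - v s) * (ξ t ω - v t) from rfl] at this
    rw [this, hmean0 s, hmean0 t, mul_zero]
  -- the main identity
  have hexpand : ∀ ω, (Q ω - x) ⬝ᵥ L.mulVec (Q ω - x)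
      = ∑ s, ∑ t, (c s * c t * L s t) * ((ξ s ω - v s) * (ξ t ω - v t)) := by
    intro ω
    simp only [dotProduct, mulVec, Finset.mul_sum]
    refine Finset.sum_congr rfl fun s _ => Finset.sum_congr rfl fun t _ => ?_
    rw [hQx ω s, hQx ω t]
    ring
  have hI : ∫ ω, (Q ω - x) ⬝ᵥ L.mulVec (Q ω - x) ∂μ = ∑ t, (c t) ^ 2 * L t t * E t := by
    have h1 : ∫ ω, (Q ω - x) ⬝ᵥ L.mulVec (Q ω - x) ∂μ
        = ∑ s, ∑ t, (c s * c t * L s t) * ∫ ω, (ξ s ω - v s) * (ξ t ω - v t) ∂μ := by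
      rw [show (fun ω => (Q ω - x) ⬝ᵥ L.mulVec (Q ω - x))
          = fun ω => ∑ s, ∑ t, (c s * c t * L s t) * ((ξ s ω - v s) * (ξ t ω - v t)) from
        funext hexpand]
      rw [integral_finset_sum _ fun s _ => integrable_finset_sum _
        fun t _ => (hintpair s t).const_mul _]
      refine Finset.sum_congr rfl fun s _ => ?_
      rw [integral_finset_sum _ fun t _ => (hintpair s t).const_mul _]
      exact Finset.sum_congr rfl fun t _ => integral_const_mul _ _
    rw [h1]
    refine Finset.sum_congr rfl fun s _ => ?_
    rw [Finset.sum_eq_single_of_mem s (Finset.mem_univ s)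
      (fun t _ hts => by rw [hD0 s t (Ne.symm hts), mul_zero])]
    have : ∫ ω, (ξ s ω - v s) * (ξ s ω - v s) ∂μ = E s := by
      rw [hE]
      simp only
      refine integral_congr_ae (Filter.Eventually.of_forall fun ω => ?_)
      ring
    rw [this]
    ring
  -- diagonal entries of PSD matrix are nonneg
  have hLd : ∀ t, 0 ≤ L t t := by
    intro t
    exact hL.diag_nonneg
  -- per-block bounds
  have hvsum : ∀ l, ∑ j, (v ⟨l, j⟩) ^ 2 ≤ 1 := by
    intro l
    rcases eq_or_ne (nxl l) 0 with h0 | h0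
    · have : ∀ j, v ⟨l, j⟩ = 0 := fun j => by rw [hv]; simp [h0]
      simp [this]
    · have : ∑ j, (v ⟨l, j⟩) ^ 2 = (∑ j, (x ⟨l, j⟩) ^ 2) / (nxl l) ^ 2 := by
        rw [Finset.sum_div]
        refine Finset.sum_congr rfl fun j _ => ?_
        rw [hv]
        rw [div_pow, sq_abs]
      rw [this, ← hsq l, div_self (pow_ne_zero 2 h0)]
  have hblockB : ∀ l, ∑ j, (c ⟨l, j⟩) ^ 2 * L ⟨l, j⟩ ⟨l, j⟩ * E ⟨l, j⟩
      ≤ (h l * Real.sqrt (∑ j, (L ⟨l, j⟩ ⟨l, j⟩) ^ 2)) * (nxl l) ^ 2 := by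
    intro l
    have step1 : ∑ j, (c ⟨l, j⟩) ^ 2 * L ⟨l, j⟩ ⟨l, j⟩ * E ⟨l, j⟩
        ≤ (nxl l) ^ 2 * h l * ∑ j, L ⟨l, j⟩ ⟨l, j⟩ * v ⟨l, j⟩ := by
      rw [Finset.mul_sum]
      refine Finset.sum_le_sum fun j _ => ?_
      have h1 := hc2 ⟨l, j⟩
      have h2 := hEhv ⟨l, j⟩
      have h3 := hLd ⟨l, j⟩
      have h4 := hE0 ⟨l, j⟩
      have h5 : (0:ℝ) ≤ (c ⟨l, j⟩) ^ 2 := sq_nonneg _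
      have h6 : (0:ℝ) ≤ (nxl l) ^ 2 := sq_nonneg _
      have h7 : (0:ℝ) ≤ h l := (hh l).le
      have h8 := hv0 ⟨l, j⟩
      nlinarith [mul_nonneg h3 h4, mul_nonneg h5 h3, mul_nonneg h6 h3]
    have step3 : ∑ j, L ⟨l, j⟩ ⟨l, j⟩ * v ⟨l, j⟩
        ≤ Real.sqrt (∑ j, (L ⟨l, j⟩ ⟨l, j⟩) ^ 2) := by
      have cs := Finset.sum_mul_sq_le_sq_mul_sq Finset.univ
        (fun j => L ⟨l, j⟩ ⟨l, j⟩) (fun j => v ⟨l, j⟩)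
      have hnn : 0 ≤ ∑ j, L ⟨l, j⟩ ⟨l, j⟩ * v ⟨l, j⟩ :=
        Finset.sum_nonneg fun j _ => mul_nonneg (hLd _) (hv0 _)
      have h1 : (∑ j, L ⟨l, j⟩ ⟨l, j⟩ * v ⟨l, j⟩) ^ 2
          ≤ (∑ j, (L ⟨l, j⟩ ⟨l, j⟩) ^ 2) * 1 := by
        calc (∑ j, L ⟨l, j⟩ ⟨l, j⟩ * v ⟨l, j⟩) ^ 2
            ≤ (∑ j, (L ⟨l, j⟩ ⟨l, j⟩) ^ 2) * ∑ j, (v ⟨l, j⟩) ^ 2 := cs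
          _ ≤ (∑ j, (L ⟨l, j⟩ ⟨l, j⟩) ^ 2) * 1 := by
              refine mul_le_mul_of_nonneg_left (hvsum l) ?_
              exact Finset.sum_nonneg fun j _ => sq_nonneg _
      rw [mul_one] at h1
      calc ∑ j, L ⟨l, j⟩ ⟨l, j⟩ * v ⟨l, j⟩
          = Real.sqrt ((∑ j, L ⟨l, j⟩ ⟨l, j⟩ * v ⟨l, j⟩) ^ 2) := (Real.sqrt_sq hnn).symm
        _ ≤ Real.sqrt (∑ j, (L ⟨l, j⟩ ⟨l, j⟩) ^ 2) := Real.sqrt_le_sqrt h1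
    calc ∑ j, (c ⟨l, j⟩) ^ 2 * L ⟨l, j⟩ ⟨l, j⟩ * E ⟨l, j⟩
        ≤ (nxl l) ^ 2 * h l * ∑ j, L ⟨l, j⟩ ⟨l, j⟩ * v ⟨l, j⟩ := step1
      _ ≤ (nxl l) ^ 2 * h l * Real.sqrt (∑ j, (L ⟨l, j⟩ ⟨l, j⟩) ^ 2) := by
          exact mul_le_mul_of_nonneg_left step3 (mul_nonneg (sq_nonneg _) (hh l).le)
      _ = (h l * Real.sqrt (∑ j, (L ⟨l, j⟩ ⟨l, j⟩) ^ 2)) * (nxl l) ^ 2 := by ring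
  have hblockA : ∀ l, ∑ j, (c ⟨l, j⟩) ^ 2 * L ⟨l, j⟩ ⟨l, j⟩ * E ⟨l, j⟩
      ≤ ((h l) ^ 2 * ∑ j, L ⟨l, j⟩ ⟨l, j⟩) * (nxl l) ^ 2 := by
    intro l
    have : ((h l) ^ 2 * ∑ j, L ⟨l, j⟩ ⟨l, j⟩) * (nxl l) ^ 2
        = ∑ j, (h l) ^ 2 * L ⟨l, j⟩ ⟨l, j⟩ * (nxl l) ^ 2 := by
      rw [Finset.mul_sum, Finset.sum_mul]
    rw [this]
    refine Finset.sum_le_sum fun j _ => ?_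
    have h1 := hc2 ⟨l, j⟩
    have h2 := hEh2 ⟨l, j⟩
    have h3 := hLd ⟨l, j⟩
    have h4 := hE0 ⟨l, j⟩
    have h5 : (0:ℝ) ≤ (c ⟨l, j⟩) ^ 2 := sq_nonneg _
    nlinarith [mul_nonneg h3 h4, mul_nonneg h5 h3, mul_nonneg (sq_nonneg (nxl l)) h3]
  have hblock : ∀ l, ∑ j, (c ⟨l, j⟩) ^ 2 * L ⟨l, j⟩ ⟨l, j⟩ * E ⟨l, j⟩
      ≤ min ((h l) ^ 2 * ∑ j, L ⟨l, j⟩ ⟨l, j⟩)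
          (h l * Real.sqrt (∑ j, (L ⟨l, j⟩ ⟨l, j⟩) ^ 2)) * (nxl l) ^ 2 := by
    intro l
    rcases min_cases ((h l) ^ 2 * ∑ j, L ⟨l, j⟩ ⟨l, j⟩)
      (h l * Real.sqrt (∑ j, (L ⟨l, j⟩ ⟨l, j⟩) ^ 2)) with ⟨heq, _⟩ | ⟨heq, _⟩ <;>
      rw [heq]
    · exact hblockA l
    · exact hblockB l
  -- assemble
  have hxx : x ⬝ᵥ x = ∑ l, (nxl l) ^ 2 := by
    rw [dotProduct, ← Finset.univ_sigma_univ, Finset.sum_sigma]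
    exact Finset.sum_congr rfl fun l _ => by
      rw [hsq l]
      exact Finset.sum_congr rfl fun j _ => (sq (x ⟨l, j⟩)).symm
  have hsplit : ∑ t, (c t) ^ 2 * L t t * E t
      = ∑ l, ∑ j, (c ⟨l, j⟩) ^ 2 * L ⟨l, j⟩ ⟨l, j⟩ * E ⟨l, j⟩ := by
    rw [← Finset.univ_sigma_univ, Finset.sum_sigma]
  have hfinal : ∀ (b : Fin B → ℝ), (∀ l, ∑ j, (c ⟨l, j⟩) ^ 2 * L ⟨l, j⟩ ⟨l, j⟩ * E ⟨l, j⟩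
      ≤ b l * (nxl l) ^ 2) →
      ∫ ω, (Q ω - x) ⬝ᵥ L.mulVec (Q ω - x) ∂μ ≤ (⨆ l, b l) * (x ⬝ᵥ x) := by
    intro b hb
    rw [hI, hsplit, hxx, Finset.mul_sum]
    refine Finset.sum_le_sum fun l _ => ?_
    refine le_trans (hb l) (mul_le_mul_of_nonneg_right ?_ (sq_nonneg _))
    exact le_ciSup (Set.Finite.bddAbove (Set.finite_range b)) l
  constructor
  · exact hfinal _ hblock
  · exact hfinal _ hblockB
end

section
/- The optimization problem min over h ∈ ℝ^d with h_j > 0 of ‖diag(𝐋)h‖ = √(Σ_j 𝐋_{jj}² h_j²) subject to ‖h^{-1}‖ = √(Σ_j h_j^{-2}) = β has the unique solution h_j = (1/β)√((Σ_t 𝐋_{tt}) / 𝐋_{jj}), and the optimal value equals (1/β) Σ_j 𝐋_{jj}. -/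
open Matrix BigOperators RealInnerProductSpace

/-- The problem `min ‖diag(L)h‖ s.t. ‖h⁻¹‖ = β, h_j > 0` has the unique solution
`h_j = (1/β)√((Σ_t L_tt)/L_jj)` with optimal value `(1/β) Σ_j L_jj`. -/
theorem stmt10 {d : ℕ} (hd : 0 < d) (L : Matrix (Fin d) (Fin d) ℝ) (hL : L.PosDef)
    (β : ℝ) (hβ : 0 < β)
    (hstar : Fin d → ℝ)
    (hdef : ∀ j, hstar j = (1 / β) * Real.sqrt ((∑ t, L t t) / L j j)) :
    (∀ j, 0 < hstar j)
    ∧ Real.sqrt (∑ j, (hstar j)⁻¹ ^ 2) = β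
    ∧ Real.sqrt (∑ j, (L j j) ^ 2 * (hstar j) ^ 2) = (1 / β) * ∑ j, L j j
    ∧ (∀ h : Fin d → ℝ, (∀ j, 0 < h j) → Real.sqrt (∑ j, (h j)⁻¹ ^ 2) = β →
        Real.sqrt (∑ j, (L j j) ^ 2 * (hstar j) ^ 2)
          ≤ Real.sqrt (∑ j, (L j j) ^ 2 * (h j) ^ 2))
    ∧ (∀ h : Fin d → ℝ, (∀ j, 0 < h j) → Real.sqrt (∑ j, (h j)⁻¹ ^ 2) = β →
        Real.sqrt (∑ j, (L j j) ^ 2 * (h j) ^ 2)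
          = Real.sqrt (∑ j, (L j j) ^ 2 * (hstar j) ^ 2) → h = hstar) := by
  have hLd : ∀ j, 0 < L j j := by
    intro j
    exact hL.diag_pos
  set S : ℝ := ∑ t, L t t with hSdef
  haveI : Nonempty (Fin d) := Fin.pos_iff_nonempty.mp hd
  have hS : 0 < S := Finset.sum_pos (fun i _ => hLd i) Finset.univ_nonempty
  have hpos : ∀ j, 0 < hstar j := by
    intro j
    rw [hdef j]
    exact mul_pos (by positivity) (Real.sqrt_pos.2 (div_pos hS (hLd j)))
  have hsq : ∀ j, (hstar j) ^ 2 = S / (β ^ 2 * L j j) := by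
    intro j
    rw [hdef j, mul_pow, Real.sq_sqrt (div_nonneg hS.le (hLd j).le)]
    field_simp
  have hconstr : ∑ j, (hstar j)⁻¹ ^ 2 = β ^ 2 := by
    have : ∀ j, (hstar j)⁻¹ ^ 2 = β ^ 2 * L j j / S := by
      intro j
      rw [inv_pow, hsq j, inv_div]
    rw [Finset.sum_congr rfl (fun j _ => this j), ← Finset.sum_div, ← Finset.mul_sum,
      ← hSdef, mul_div_assoc, div_self hS.ne', mul_one]
  have hobj : ∑ j, (L j j) ^ 2 * (hstar j) ^ 2 = S ^ 2 / β ^ 2 := by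
    have : ∀ j, (L j j) ^ 2 * (hstar j) ^ 2 = L j j * (S / β ^ 2) := by
      intro j
      rw [hsq j]
      field_simp [(hLd j).ne', hβ.ne']
    rw [Finset.sum_congr rfl (fun j _ => this j), ← Finset.sum_mul, ← hSdef]
    field_simp
  have hobjsqrt : Real.sqrt (∑ j, (L j j) ^ 2 * (hstar j) ^ 2) = (1 / β) * S := by
    rw [hobj, show S ^ 2 / β ^ 2 = ((1 / β) * S) ^ 2 by field_simp,
      Real.sqrt_sq (by positivity)]
  -- for any feasible h: sum of inverse squares equals β², and Cauchy-Schwarz bound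
  have key : ∀ h : Fin d → ℝ, (∀ j, 0 < h j) → Real.sqrt (∑ j, (h j)⁻¹ ^ 2) = β →
      S ^ 2 / β ^ 2 ≤ ∑ j, (L j j) ^ 2 * (h j) ^ 2 := by
    intro h hp hc
    have hsum : ∑ j, (h j)⁻¹ ^ 2 = β ^ 2 := by
      have h2 := Real.sq_sqrt (show (0:ℝ) ≤ ∑ j, (h j)⁻¹ ^ 2 from
        Finset.sum_nonneg fun j _ => sq_nonneg _)
      rw [hc] at h2
      exact h2.symm
    have CS := Finset.sum_mul_sq_le_sq_mul_sq Finset.univ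
      (fun j => L j j * h j) (fun j => (h j)⁻¹)
    have hl : ∑ j, (L j j * h j) * (h j)⁻¹ = S := by
      apply Finset.sum_congr rfl
      intro j _
      rw [mul_assoc, mul_inv_cancel₀ (hp j).ne', mul_one]
    have hr : ∀ j, (L j j * h j) ^ 2 = (L j j) ^ 2 * (h j) ^ 2 := fun j => mul_pow _ _ _
    rw [hl, Finset.sum_congr rfl (fun j _ => hr j), hsum] at CS
    rw [div_le_iff₀ (by positivity)]
    linarith
  refine ⟨hpos, ?_, hobjsqrt, ?_, ?_⟩
  · rw [hconstr, Real.sqrt_sq hβ.le]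
  · intro h hp hc
    rw [hobjsqrt]
    have := key h hp hc
    calc (1 / β) * S = Real.sqrt (S ^ 2 / β ^ 2) := by
          rw [show S ^ 2 / β ^ 2 = ((1 / β) * S) ^ 2 by field_simp,
            Real.sqrt_sq (by positivity)]
      _ ≤ _ := Real.sqrt_le_sqrt this
  · intro h hp hc heq
    have hsum : ∑ j, (h j)⁻¹ ^ 2 = β ^ 2 := by
      have h2 := Real.sq_sqrt (show (0:ℝ) ≤ ∑ j, (h j)⁻¹ ^ 2 from
        Finset.sum_nonneg fun j _ => sq_nonneg _)
      rw [hc] at h2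
      exact h2.symm
    have hobj' : ∑ j, (L j j) ^ 2 * (h j) ^ 2 = S ^ 2 / β ^ 2 := by
      have h2 := Real.sq_sqrt (show (0:ℝ) ≤ ∑ j, (L j j) ^ 2 * (h j) ^ 2 from
        Finset.sum_nonneg fun j _ => mul_nonneg (sq_nonneg _) (sq_nonneg _))
      rw [heq, hobjsqrt] at h2
      rw [← h2]
      ring
    -- Cauchy-Schwarz equality case via EuclideanSpace
    set x : EuclideanSpace ℝ (Fin d) := WithLp.toLp 2 (fun j => L j j * h j) with hx
    set y : EuclideanSpace ℝ (Fin d) := WithLp.toLp 2 (fun j => (h j)⁻¹) with hy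
    have hnx : ‖x‖ = S / β := by
      rw [EuclideanSpace.norm_eq]
      have : ∀ j, ‖x j‖ ^ 2 = (L j j) ^ 2 * (h j) ^ 2 := by
        intro j
        rw [Real.norm_eq_abs, sq_abs, hx, PiLp.toLp_apply, mul_pow]
      rw [Finset.sum_congr rfl (fun j _ => this j), hobj',
        show S ^ 2 / β ^ 2 = (S / β) ^ 2 by ring, Real.sqrt_sq (by positivity)]
    have hny : ‖y‖ = β := by
      rw [EuclideanSpace.norm_eq]
      have : ∀ j, ‖y j‖ ^ 2 = (h j)⁻¹ ^ 2 := by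
        intro j
        rw [Real.norm_eq_abs, sq_abs]
      rw [Finset.sum_congr rfl (fun j _ => this j), hsum, Real.sqrt_sq hβ.le]
    have hinner : ⟪x, y⟫ = ‖x‖ * ‖y‖ := by
      rw [hnx, hny, div_mul_cancel₀ _ hβ.ne']
      simp only [PiLp.inner_apply, RCLike.inner_apply, conj_trivial]
      rw [Finset.sum_congr rfl (fun j _ => mul_comm (y j) (x j))]
      calc ∑ j, x j * y j = ∑ j, L j j := by
            apply Finset.sum_congr rfl
            intro j _
            rw [hx, hy]
            simp only [PiLp.toLp_apply]
            rw [mul_assoc, mul_inv_cancel₀ (hp j).ne', mul_one]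
        _ = S := rfl
    have heqv := inner_eq_norm_mul_iff_real.mp hinner
    rw [hnx, hny] at heqv
    funext j
    have hj := congrArg (fun v : EuclideanSpace ℝ (Fin d) => v j) heqv
    simp only [PiLp.smul_apply, smul_eq_mul, hx, hy, PiLp.toLp_apply] at hj
    -- hj : β * (L j j * h j) = (S / β) * (h j)⁻¹
    have hhsq : (h j) ^ 2 = S / (β ^ 2 * L j j) := by
      have hne : (h j) ≠ 0 := (hp j).ne'
      field_simp at hj
      rw [eq_div_iff (mul_pos (pow_pos hβ 2) (hLd j)).ne']
      linear_combination hj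
    have : (h j) ^ 2 = (hstar j) ^ 2 := by rw [hhsq, hsq j]
    calc h j = Real.sqrt ((h j) ^ 2) := (Real.sqrt_sq (hp j).le).symm
      _ = Real.sqrt ((hstar j) ^ 2) := by rw [this]
      _ = hstar j := Real.sqrt_sq (hpos j).le
end

section
/- Let 𝒞 be an unbiased compressor on ℝ^d (E[𝒞(z)] = z for all z), 𝐋 ⪰ 0 symmetric positive semidefinite, and g ∈ range(𝐋). Then E[𝐋^{1/2} 𝒞(𝐋^{†1/2} g)] = g, and E[‖𝐋^{1/2} 𝒞(𝐋^{†1/2} g) − g‖²] ≤ ℒ(𝒞, 𝐋) · ‖g‖²_{𝐋^†}, where ℒ(𝒞, 𝐋) satisfies E[‖𝒞(z) − z‖²_𝐋] ≤ ℒ(𝒞, 𝐋)‖z‖² for all z. -/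
open Matrix MeasureTheory

/-- Moore–Penrose pseudoinverse conditions for real matrices. -/
def IsMP {d : ℕ} (L Lp : Matrix (Fin d) (Fin d) ℝ) : Prop :=
  L * Lp * L = L ∧ Lp * L * Lp = Lp ∧ (L * Lp)ᵀ = L * Lp ∧ (Lp * L)ᵀ = Lp * L

lemma mp_unique {d : ℕ} {A X Y : Matrix (Fin d) (Fin d) ℝ}
    (hX : IsMP A X) (hY : IsMP A Y) : X = Y := by
  obtain ⟨hX1, hX2, hX3, hX4⟩ := hX
  obtain ⟨hY1, hY2, hY3, hY4⟩ := hY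
  have hAX : A * X = A * Y := by
    calc A * X = (A * X)ᵀ := hX3.symm
    _ = ((A * Y) * (A * X))ᵀ := by rw [show (A*Y)*(A*X) = (A*Y*A)*X by noncomm_ring, hY1]
    _ = (A * X)ᵀ * (A * Y)ᵀ := transpose_mul _ _
    _ = (A * X) * (A * Y) := by rw [hX3, hY3]
    _ = A * Y := by rw [show (A*X)*(A*Y) = (A*X*A)*Y by noncomm_ring, hX1]
  have hXA : X * A = Y * A := by
    calc X * A = (X * A)ᵀ := hX4.symm
    _ = ((X * A) * (Y * A))ᵀ := by rw [show (X*A)*(Y*A) = X*(A*Y*A) by noncomm_ring, hY1]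
    _ = (Y * A)ᵀ * (X * A)ᵀ := transpose_mul _ _
    _ = (Y * A) * (X * A) := by rw [hX4, hY4]
    _ = Y * A := by rw [show (Y*A)*(X*A) = Y*(A*X*A) by noncomm_ring, hX1]
  calc X = X * A * X := hX2.symm
  _ = Y * (A * X) := by rw [hXA, mul_assoc]
  _ = Y * (A * Y) := by rw [hAX]
  _ = Y := by rw [← mul_assoc]; exact hY2

section sqHelper
open scoped MatrixOrder

lemma Matrix.PosSemidef.eq_of_sq_eq_sq {d : ℕ} {A B : Matrix (Fin d) (Fin d) ℝ}
    (hA : A.PosSemidef) (hB : B.PosSemidef) (h : A ^ 2 = B ^ 2) : A = B :=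
  (CFC.sq_eq_sq_iff A B hA.nonneg hB.nonneg).1 h

end sqHelper

lemma key17 {d : ℕ} {L Lp Lh Lph : Matrix (Fin d) (Fin d) ℝ}
    (hL : L.PosSemidef)
    (hLh : Lh.PosSemidef ∧ Lh * Lh = L)
    (hLp : IsMP L Lp)
    (hLph : Lph.PosSemidef ∧ Lph * Lph = Lp) :
    Lh * Lph * L = L := by
  have hH := hL.1
  set V : Matrix (Fin d) (Fin d) ℝ := (hH.eigenvectorUnitary : Matrix (Fin d) (Fin d) ℝ) with hVdef
  have hV1 : Vᴴ * V = 1 := by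
    simpa [Matrix.star_eq_conjTranspose] using (Unitary.mem_iff.mp hH.eigenvectorUnitary.2).1
  set D : (Fin d → ℝ) → Matrix (Fin d) (Fin d) ℝ := fun f => V * diagonal f * Vᴴ with hDdef
  have hcongr : ∀ f g : Fin d → ℝ, (∀ i, f i = g i) → D f = D g := by
    intro f g h
    have : f = g := funext h
    rw [this]
  have hcancel : ∀ M : Matrix (Fin d) (Fin d) ℝ, Vᴴ * (V * M) = M := by
    intro M; rw [← mul_assoc, hV1, one_mul]
  have hD : ∀ f g : Fin d → ℝ, D f * D g = D (fun i => f i * g i) := by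
    intro f g
    show (V * diagonal f * Vᴴ) * (V * diagonal g * Vᴴ) = V * diagonal (fun i => f i * g i) * Vᴴ
    rw [← diagonal_mul_diagonal]
    simp only [mul_assoc, hcancel]
  have hHerm : ∀ f : Fin d → ℝ, (D f)ᴴ = D f := by
    intro f
    simp [hDdef, conjTranspose_mul, diagonal_conjTranspose, mul_assoc]
  have hT : ∀ f : Fin d → ℝ, (D f)ᵀ = D f := by
    intro f
    rw [← Matrix.conjTranspose_eq_transpose_of_trivial]
    exact hHerm f
  have hPSD : ∀ f : Fin d → ℝ, (∀ i, 0 ≤ f i) → (D f).PosSemidef := by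
    intro f hf
    exact (Matrix.posSemidef_diagonal_iff.2 hf).mul_mul_conjTranspose_same V
  set ev : Fin d → ℝ := hH.eigenvalues with hev
  have evnn : ∀ i, 0 ≤ ev i := fun i => hL.eigenvalues_nonneg i
  have hLD : L = D ev := by
    have := hH.spectral_theorem
    simpa [hDdef, Matrix.star_eq_conjTranspose, Function.comp] using this
  set pin : Fin d → ℝ := fun i => if ev i = 0 then 0 else (ev i)⁻¹ with hpin
  have pinn : ∀ i, 0 ≤ pin i := by
    intro i; simp only [hpin]
    split
    · exact le_refl 0
    · exact inv_nonneg.2 (evnn i)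
  have hLhD : Lh = D (fun i => Real.sqrt (ev i)) := by
    refine hLh.1.eq_of_sq_eq_sq (hPSD _ fun i => Real.sqrt_nonneg _) ?_
    rw [pow_two, pow_two, hLh.2, hD, hLD]
    refine hcongr _ _ fun i => ?_
    exact (Real.mul_self_sqrt (evnn i)).symm
  have hLpD : Lp = D pin := by
    refine mp_unique hLp ?_
    have h1 : L * D pin * L = L := by
      rw [hLD, hD, hD]
      refine hcongr _ _ fun i => ?_
      show ev i * pin i * ev i = ev i
      by_cases h : ev i = 0
      · simp [hpin, h]
      · simp only [hpin, if_neg h]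
        field_simp
    have h2 : D pin * L * D pin = D pin := by
      rw [hLD, hD, hD]
      refine hcongr _ _ fun i => ?_
      show pin i * ev i * pin i = pin i
      by_cases h : ev i = 0
      · simp [hpin, h]
      · simp only [hpin, if_neg h]
        field_simp
    have h3 : (L * D pin)ᵀ = L * D pin := by rw [hLD, hD, hT]
    have h4 : (D pin * L)ᵀ = D pin * L := by rw [hLD, hD, hT]
    exact ⟨h1, h2, h3, h4⟩
  have hLphD : Lph = D (fun i => Real.sqrt (pin i)) := by
    refine hLph.1.eq_of_sq_eq_sq (hPSD _ fun i => Real.sqrt_nonneg _) ?_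
    rw [pow_two, pow_two, hLph.2, hLpD, hD]
    refine hcongr _ _ fun i => ?_
    exact (Real.mul_self_sqrt (pinn i)).symm
  rw [hLhD, hLphD, hLD, hD, hD]
  refine hcongr _ _ fun i => ?_
  show Real.sqrt (ev i) * Real.sqrt (pin i) * ev i = ev i
  by_cases h : ev i = 0
  · simp [hpin, h]
  · simp only [hpin, if_neg h]
    rw [← Real.sqrt_mul (evnn i), mul_inv_cancel₀ h, Real.sqrt_one, one_mul]

/-- For an unbiased compressor `C`, `L ⪰ 0` and `g ∈ range(L)`:
`E[L^{1/2} C(L^{†1/2} g)] = g` and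
`E‖L^{1/2} C(L^{†1/2} g) - g‖² ≤ ℒ(C, L) ‖g‖²_{L^†}`,
where `ℒcal` satisfies `E‖C(z) - z‖²_L ≤ ℒcal ‖z‖²` for all `z`. -/
theorem stmt17 {d : ℕ} {Ω : Type*} [MeasurableSpace Ω] (μ : Measure Ω)
    [IsProbabilityMeasure μ]
    (C : Ω → (Fin d → ℝ) → Fin d → ℝ)
    (hCint : ∀ z : Fin d → ℝ, Integrable (fun ω => C ω z) μ)
    (hunb : ∀ z : Fin d → ℝ, ∫ ω, C ω z ∂μ = z)
    (L Lp Lh Lph : Matrix (Fin d) (Fin d) ℝ)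
    (hL : L.PosSemidef)
    (hLh : Lh.PosSemidef ∧ Lh * Lh = L)
    (hLp : IsMP L Lp)
    (hLph : Lph.PosSemidef ∧ Lph * Lph = Lp)
    (ℒcal : ℝ)
    (hvar : ∀ z : Fin d → ℝ, ∫ ω, (C ω z - z) ⬝ᵥ L.mulVec (C ω z - z) ∂μ ≤ ℒcal * (z ⬝ᵥ z))
    (g : Fin d → ℝ) (hg : ∃ r, g = L.mulVec r) :
    (∫ ω, Lh.mulVec (C ω (Lph.mulVec g)) ∂μ) = g
    ∧ ∫ ω, (Lh.mulVec (C ω (Lph.mulVec g)) - g) ⬝ᵥ (Lh.mulVec (C ω (Lph.mulVec g)) - g) ∂μ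
        ≤ ℒcal * (g ⬝ᵥ Lp.mulVec g) := by
  obtain ⟨r, hr⟩ := hg
  have hkey : Lh * Lph * L = L := key17 hL hLh hLp hLph
  set z : Fin d → ℝ := Lph.mulVec g with hz
  have hLhz : Lh.mulVec z = g := by
    rw [hz, hr, mulVec_mulVec, mulVec_mulVec, hkey]
  have hLhT : Lhᵀ = Lh := by
    rw [← Matrix.conjTranspose_eq_transpose_of_trivial]; exact hLh.1.1
  have hLphT : Lphᵀ = Lph := by
    rw [← Matrix.conjTranspose_eq_transpose_of_trivial]; exact hLph.1.1
  have hΛ : ∀ u : Fin d → ℝ, (Lh.mulVec u) ⬝ᵥ (Lh.mulVec u) = u ⬝ᵥ L.mulVec u := by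
    intro u
    rw [← hLh.2, ← mulVec_mulVec, dotProduct_mulVec u, ← mulVec_transpose, hLhT]
  constructor
  · have hswap : ∫ ω, Lh.mulVec (C ω z) ∂μ = Lh.mulVec (∫ ω, C ω z ∂μ) := by
      have := (LinearMap.toContinuousLinearMap (Matrix.mulVecLin Lh)).integral_comp_comm
        (hCint z)
      simpa using this
    rw [hswap, hunb z, hLhz]
  · have hInt : ∀ ω, (Lh.mulVec (C ω z) - g) ⬝ᵥ (Lh.mulVec (C ω z) - g)
        = (C ω z - z) ⬝ᵥ L.mulVec (C ω z - z) := by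
      intro ω
      rw [show Lh.mulVec (C ω z) - g = Lh.mulVec (C ω z - z) by rw [mulVec_sub, hLhz]]
      exact hΛ _
    have hzz : z ⬝ᵥ z = g ⬝ᵥ Lp.mulVec g := by
      rw [hz, ← hLph.2, ← mulVec_mulVec, dotProduct_mulVec g, ← mulVec_transpose, hLphT]
    calc ∫ ω, (Lh.mulVec (C ω z) - g) ⬝ᵥ (Lh.mulVec (C ω z) - g) ∂μ
        = ∫ ω, (C ω z - z) ⬝ᵥ L.mulVec (C ω z - z) ∂μ := by
          exact integral_congr_ae (Filter.Eventually.of_forall hInt)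
      _ ≤ ℒcal * (z ⬝ᵥ z) := hvar z
      _ = ℒcal * (g ⬝ᵥ Lp.mulVec g) := by rw [hzz]
end

section
/- Let f_i be convex and 𝐋_i-smooth with ∇f_i(x) ∈ range(𝐋_i) for all x. Then for all x, y: ‖∇f_i(x) − ∇f_i(y)‖²_{𝐋_i^†} ≤ 2 D_{f_i}(x, y), where D_{f_i}(x, y) = f_i(x) − f_i(y) − ⟨∇f_i(y), x − y⟩ is the Bregman divergence. -/
open Matrix

/-- Gradient inequality for a convex differentiable function. -/
lemma grad_ineq {d : ℕ} (f : (Fin d → ℝ) → ℝ)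
    (hdiff : Differentiable ℝ f) (hconv : ConvexOn ℝ Set.univ f)
    (x y : Fin d → ℝ) : f y + fderiv ℝ f y (x - y) ≤ f x := by
  set h : ℝ → ℝ := fun t => f (y + t • (x - y)) with hh
  have hline : ∀ t : ℝ, HasDerivAt (fun t : ℝ => y + t • (x - y)) (x - y) t := by
    intro t
    simpa using ((hasDerivAt_id t).smul_const (x - y)).const_add y
  have hderiv : HasDerivAt h (fderiv ℝ f y (x - y)) 0 := by
    have h0 : (y + (0 : ℝ) • (x - y)) = y := by simp
    have hf : HasFDerivAt f (fderiv ℝ f y) (y + (0:ℝ) • (x - y)) := by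
      rw [h0]; exact (hdiff y).hasFDerivAt
    exact hf.comp_hasDerivAt 0 (hline 0)
  have hconv' : ConvexOn ℝ Set.univ h := by
    have := hconv.comp_affineMap (AffineMap.lineMap y x : ℝ →ᵃ[ℝ] (Fin d → ℝ))
    have heq : (f ∘ (AffineMap.lineMap y x : ℝ →ᵃ[ℝ] (Fin d → ℝ))) = h := by
      funext t
      simp [h, AffineMap.lineMap_apply, add_comm]
    rw [heq] at this
    simpa using this
  have := hconv'.le_slope_of_hasDerivAt (Set.mem_univ (0:ℝ)) (Set.mem_univ (1:ℝ))
    (by norm_num) hderiv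
  have hs : slope h 0 1 = f x - f y := by
    simp [slope, h]
  rw [hs] at this
  linarith

/-- If `f` is convex and `L`-smooth (matrix sense, with gradient `g`), and `∇f(x) ∈ range(L)`
for all `x`, then `‖∇f(x) - ∇f(y)‖²_{L^†} ≤ 2 D_f(x, y)`. -/
theorem stmt18 {d : ℕ} (f : (Fin d → ℝ) → ℝ) (g : (Fin d → ℝ) → Fin d → ℝ)
    (hdiff : Differentiable ℝ f)
    (hgrad : ∀ x u, fderiv ℝ f x u = g x ⬝ᵥ u)
    (hconv : ConvexOn ℝ Set.univ f)
    (L Lp : Matrix (Fin d) (Fin d) ℝ) (hL : L.PosSemidef) (hLp : IsMP L Lp)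
    (hsm : ∀ x y, f x ≤ f y + g y ⬝ᵥ (x - y) + (1 / 2) * ((x - y) ⬝ᵥ L.mulVec (x - y)))
    (hrange : ∀ x, ∃ r, g x = L.mulVec r) :
    ∀ x y, (g x - g y) ⬝ᵥ Lp.mulVec (g x - g y)
      ≤ 2 * (f x - f y - g y ⬝ᵥ (x - y)) := by
  intro x y
  set v : Fin d → ℝ := g x - g y with hv
  -- v is in the range of L
  obtain ⟨r1, hr1⟩ := hrange x
  obtain ⟨r2, hr2⟩ := hrange y
  have hvrange : v = L.mulVec (r1 - r2) := by
    rw [hv, hr1, hr2, Matrix.mulVec_sub]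
  -- L Lp v = v
  have hLLpv : L.mulVec (Lp.mulVec v) = v := by
    rw [hvrange, Matrix.mulVec_mulVec, Matrix.mulVec_mulVec, hLp.1]
  set z : Fin d → ℝ := x - Lp.mulVec v with hz
  -- smoothness at (z, x)
  have h1 := hsm z x
  -- convexity gradient inequality at (z, y)
  have h2 : f y + g y ⬝ᵥ (z - y) ≤ f z := by
    have := grad_ineq f hdiff hconv z y
    rwa [hgrad] at this
  have hzx : z - x = -(Lp.mulVec v) := by rw [hz]; abel
  have e1 : g x ⬝ᵥ (z - x) = -(g x ⬝ᵥ Lp.mulVec v) := by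
    rw [hzx, dotProduct_neg]
  have e2 : (z - x) ⬝ᵥ L.mulVec (z - x) = v ⬝ᵥ Lp.mulVec v := by
    rw [hzx, neg_dotProduct, Matrix.mulVec_neg, dotProduct_neg, neg_neg,
      hLLpv, dotProduct_comm]
  have e3 : g y ⬝ᵥ (z - y) = g y ⬝ᵥ (x - y) - g y ⬝ᵥ Lp.mulVec v := by
    have : z - y = (x - y) - Lp.mulVec v := by rw [hz]; abel
    rw [this, dotProduct_sub]
  have e4 : g x ⬝ᵥ Lp.mulVec v - g y ⬝ᵥ Lp.mulVec v = v ⬝ᵥ Lp.mulVec v := by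
    rw [hv, sub_dotProduct]
  rw [e1, e2] at h1
  rw [e3] at h2
  linarith
end
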